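/- Let i ≥ 0 and n ≥ 0 be integers and let q, t be nonzero complex numbers such that q^{2i+k} ≠ 1 and q^{2i+k} ≠ t for k = 1, …, n. Then the rational function s ↦ (q^{1+2i} t^{−1} s;q)_n / (q^{1+2i} s;q)_n is differentiable at s = 1 and its derivative there equals −[(q^{1+2i} t^{−1};q)_n / (q^{1+2i};q)_n] · Σ_{k=1}^n [1/(1 − q^{−2i−k}) − 1/(1 − q^{−2i−k} t)]. (Equivalently, the coefficient of (ζ₂/ζ₁)^n in the series ₂φ₁(q t^{−1}, q^{1+2i} t^{−1} s; q^{1+2i} s; q, tζ₂/ζ₁) admits the expansion c_n(1) + (1−s)·c_n(1)·Σ_{k=1}^n [1/(1 − q^{−2i−k}) − 1/(1 − q^{−2i−k}t)] + O((1−s)²) at s = 1, where c_n(1) = (q t^{−1};q)_n (q^{1+2i}t^{−1};q)_n t^n/((q;q)_n (q^{1+2i};q)_n).) -/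

import Mathlib

/-- The q-shifted factorial `(a;q)_n = ∏_{k=0}^{n−1} (1 − a q^k)`. -/
noncomputable def qp (q a : ℂ) (n : ℕ) : ℂ := ∏ k ∈ Finset.range n, (1 - a * q ^ k)

/-- The rational function
`s ↦ (q^{1+2i} t⁻¹ s;q)_n / (q^{1+2i} s;q)_n` is differentiable at `s = 1` with derivative
`−(q^{1+2i} t⁻¹;q)_n/(q^{1+2i};q)_n · ∑_{k=1}^n [1/(1 − q^{−2i−k}) − 1/(1 − q^{−2i−k} t)]`. -/
theorem statement11 (i n : ℕ) (q t : ℂ) (hq : q ≠ 0) (ht : t ≠ 0)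
    (h1 : ∀ k : ℕ, 1 ≤ k → k ≤ n → q ^ (2 * i + k) ≠ 1)
    (h2 : ∀ k : ℕ, 1 ≤ k → k ≤ n → q ^ (2 * i + k) ≠ t) :
    HasDerivAt
      (fun s : ℂ => qp q (q ^ (1 + 2 * i) * t⁻¹ * s) n / qp q (q ^ (1 + 2 * i) * s) n)
      (-(qp q (q ^ (1 + 2 * i) * t⁻¹) n / qp q (q ^ (1 + 2 * i)) n) *
        ∑ k ∈ Finset.Icc 1 n,
          (1 / (1 - (q ^ (2 * i + k))⁻¹) - 1 / (1 - (q ^ (2 * i + k))⁻¹ * t)))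
      1 := by
  set a : ℂ := q ^ (1 + 2 * i) with ha
  have hak : ∀ k : ℕ, a * q ^ k = q ^ (2 * i + (k + 1)) := by
    intro k
    rw [ha, ← pow_add]
    congr 1
    omega
  -- nonvanishing of factors
  have hd2 : ∀ k ∈ Finset.range n, (1 : ℂ) - a * q ^ k ≠ 0 := by
    intro k hk
    rw [Finset.mem_range] at hk
    have h1' := h1 (k + 1) (by omega) (by omega)
    rw [sub_ne_zero]
    intro h
    exact h1' (by rw [← hak k]; exact h.symm)
  have hd1 : ∀ k ∈ Finset.range n, (1 : ℂ) - a * t⁻¹ * q ^ k ≠ 0 := by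
    intro k hk
    rw [Finset.mem_range] at hk
    have h2' := h2 (k + 1) (by omega) (by omega)
    rw [← hak k] at h2'
    rw [sub_ne_zero]
    intro h
    apply h2'
    have heq : a * q ^ k = a * t⁻¹ * q ^ k * t := by field_simp
    rw [heq, ← h, one_mul]
  have hG1 : qp q a n ≠ 0 := by
    unfold qp
    exact Finset.prod_ne_zero_iff.mpr hd2
  have hF1 : qp q (a * t⁻¹) n ≠ 0 := by
    unfold qp
    refine Finset.prod_ne_zero_iff.mpr ?_
    intro k hk
    have := hd1 k hk
    intro h; apply this; linear_combination h
  -- derivative of numerator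
  have hF : HasDerivAt (fun s : ℂ => qp q (a * t⁻¹ * s) n)
      (qp q (a * t⁻¹) n * ∑ k ∈ Finset.range n, (-(a * t⁻¹ * q ^ k) / (1 - a * t⁻¹ * q ^ k)))
      1 := by
    have h : HasDerivAt (fun x : ℂ => ∏ i ∈ Finset.range n, (1 - a * t⁻¹ * q ^ i * x))
        (∑ i ∈ Finset.range n, (∏ j ∈ (Finset.range n).erase i, (1 - a * t⁻¹ * q ^ j * 1)) • -(a * t⁻¹ * q ^ i)) 1 :=
      HasDerivAt.fun_finsetProd (u := Finset.range n) (x := (1 : ℂ))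
      (f := fun k s => 1 - a * t⁻¹ * q ^ k * s) (f' := fun k => -(a * t⁻¹ * q ^ k))
      (fun k _ => by
        simpa using ((hasDerivAt_id (1 : ℂ)).const_mul (a * t⁻¹ * q ^ k)).const_sub 1)
    convert h using 1
    · funext s
      unfold qp
      exact Finset.prod_congr rfl fun k _ => by ring
    · rw [Finset.mul_sum]
      refine Finset.sum_congr rfl fun k hk => ?_
      have hP : (∏ j ∈ (Finset.range n).erase k, (1 - a * t⁻¹ * q ^ j)) *
          (1 - a * t⁻¹ * q ^ k) = qp q (a * t⁻¹) n := Finset.prod_erase_mul _ _ hk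
      have hdk := hd1 k hk
      simp only [smul_eq_mul, mul_one]
      rw [← hP]
      generalize (∏ j ∈ (Finset.range n).erase k, (1 - a * t⁻¹ * q ^ j)) = P
      generalize hc : a * t⁻¹ * q ^ k = c at hdk ⊢
      field_simp
  -- derivative of denominator
  have hG : HasDerivAt (fun s : ℂ => qp q (a * s) n)
      (qp q a n * ∑ k ∈ Finset.range n, (-(a * q ^ k) / (1 - a * q ^ k)))
      1 := by
    have h : HasDerivAt (fun x : ℂ => ∏ i ∈ Finset.range n, (1 - a * q ^ i * x))
        (∑ i ∈ Finset.range n, (∏ j ∈ (Finset.range n).erase i, (1 - a * q ^ j * 1)) • -(a * q ^ i)) 1 :=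
      HasDerivAt.fun_finsetProd (u := Finset.range n) (x := (1 : ℂ))
      (f := fun k s => 1 - a * q ^ k * s) (f' := fun k => -(a * q ^ k))
      (fun k _ => by
        simpa using ((hasDerivAt_id (1 : ℂ)).const_mul (a * q ^ k)).const_sub 1)
    convert h using 1
    · funext s
      unfold qp
      exact Finset.prod_congr rfl fun k _ => by ring
    · rw [Finset.mul_sum]
      refine Finset.sum_congr rfl fun k hk => ?_
      have hP : (∏ j ∈ (Finset.range n).erase k, (1 - a * q ^ j)) *
          (1 - a * q ^ k) = qp q a n := Finset.prod_erase_mul _ _ hk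
      have hdk := hd2 k hk
      simp only [smul_eq_mul, mul_one]
      rw [← hP]
      generalize (∏ j ∈ (Finset.range n).erase k, (1 - a * q ^ j)) = P
      generalize hc : a * q ^ k = c at hdk ⊢
      field_simp
  have hG1' : qp q (a * 1) n ≠ 0 := by rwa [mul_one]
  have hdiv : HasDerivAt (fun s => qp q (a * t⁻¹ * s) n / qp q (a * s) n)
      (((qp q (a * t⁻¹) n * ∑ k ∈ Finset.range n, -(a * t⁻¹ * q ^ k) / (1 - a * t⁻¹ * q ^ k)) *
          qp q (a * 1) n - qp q (a * t⁻¹ * 1) n *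
          (qp q a n * ∑ k ∈ Finset.range n, -(a * q ^ k) / (1 - a * q ^ k))) /
        qp q (a * 1) n ^ 2) 1 := hF.div hG hG1'
  convert hdiv using 1
  simp only [mul_one]
  -- the target sum equals S2 - S1
  have hsum : (∑ k ∈ Finset.Icc 1 n,
        (1 / (1 - (q ^ (2 * i + k))⁻¹) - 1 / (1 - (q ^ (2 * i + k))⁻¹ * t)))
      = (∑ k ∈ Finset.range n, (-(a * q ^ k) / (1 - a * q ^ k)))
        - (∑ k ∈ Finset.range n, (-(a * t⁻¹ * q ^ k) / (1 - a * t⁻¹ * q ^ k))) := by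
    rw [← Finset.sum_sub_distrib]
    have hIcc : Finset.Icc 1 n = Finset.Ico 1 (n + 1) := by rfl
    rw [hIcc, Finset.sum_Ico_eq_sum_range]
    simp only [Nat.add_sub_cancel]
    refine Finset.sum_congr rfl fun k hk => ?_
    rw [Finset.mem_range] at hk
    have hx0 : q ^ (2 * i + (k + 1)) ≠ 0 := pow_ne_zero _ hq
    have hx1 : q ^ (2 * i + (k + 1)) ≠ 1 := h1 (k + 1) (by omega) (by omega)
    have hxt : q ^ (2 * i + (k + 1)) ≠ t := h2 (k + 1) (by omega) (by omega)
    have hd2k : (1 : ℂ) - a * q ^ k ≠ 0 := hd2 k (Finset.mem_range.mpr hk)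
    have hd1k : (1 : ℂ) - a * t⁻¹ * q ^ k ≠ 0 := hd1 k (Finset.mem_range.mpr hk)
    have hx : a * q ^ k = q ^ (2 * i + (k + 1)) := hak k
    rw [show 2 * i + (1 + k) = 2 * i + (k + 1) by omega]
    rw [← hx] at hx0 hx1 hxt ⊢
    rw [mul_right_comm a t⁻¹ (q ^ k)] at hd1k ⊢
    generalize a * q ^ k = x at hx0 hx1 hxt hd2k hd1k ⊢
    have r1 : (1 : ℂ) - x⁻¹ = (x - 1) * x⁻¹ := by field_simp
    have r2 : (1 : ℂ) - x⁻¹ * t = (x - t) * x⁻¹ := by field_simp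
    have r3 : (1 : ℂ) - x * t⁻¹ = (t - x) * t⁻¹ := by field_simp
    rw [r1, r2, r3]
    have h5 : x - t ≠ 0 := sub_ne_zero.mpr hxt
    have h6 : x - 1 ≠ 0 := sub_ne_zero.mpr hx1
    have h7 : t - x ≠ 0 := sub_ne_zero.mpr (Ne.symm hxt)
    field_simp
    ring
  rw [hsum]
  field_simp
  ring
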